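/- Let X be a compact Hausdorff space, let A be a natural uniform algebra on X, and let x ∈ X. Suppose x has a non-trivial Jensen measure μ (a Jensen measure for x that is not the point mass δ_x), and let F be the closed support of μ. Then for every y ∈ F \ {x} we have J_y ⊆ M_x. Consequently, x is not a point of continuity for A, and no point of F \ {x} is an R-point for A. -/

import Mathlib

open MeasureTheory Set

noncomputable section

variable {X : Type*} [TopologicalSpace X]

/-- The ideal `M_x` of functions in the subalgebra `A` of `C(X)` vanishing at `x`. -/
def MsetA (A : Subalgebra ℂ C(X, ℂ)) (x : X) : Set C(X, ℂ) :=
  {f | f ∈ A ∧ f x = 0}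

/-- The ideal `J_x` of functions in `A` vanishing on a neighbourhood of `x`. -/
def JsetA (A : Subalgebra ℂ C(X, ℂ)) (x : X) : Set C(X, ℂ) :=
  {f | f ∈ A ∧ ∃ U : Set X, IsOpen U ∧ x ∈ U ∧ ∀ z ∈ U, f z = 0}

/-- `x` is a point of continuity for `A`: for every `y ∈ X \ {x}`, `J_y ⊄ M_x`. -/
def PoCA (A : Subalgebra ℂ C(X, ℂ)) (x : X) : Prop :=
  ∀ y : X, y ≠ x → ¬ (JsetA A y ⊆ MsetA A x)

/-- `x` is an R-point for `A`: for every `y ∈ X \ {x}`, `J_x ⊄ M_y`. -/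
def RPtA (A : Subalgebra ℂ C(X, ℂ)) (x : X) : Prop :=
  ∀ y : X, y ≠ x → ¬ (JsetA A x ⊆ MsetA A y)

/-- `A` is a natural uniform algebra on the compact Hausdorff space `X`: a closed,
point-separating subalgebra of `C(X)` (containing the constants, being a subalgebra)
all of whose characters are evaluations at points of `X`. -/
def IsNaturalUniformAlgebra (A : Subalgebra ℂ C(X, ℂ)) : Prop :=
  IsClosed (A : Set C(X, ℂ)) ∧
    (∀ a b : X, a ≠ b → ∃ f ∈ A, f a ≠ f b) ∧
    ∀ φ : A →ₐ[ℂ] ℂ, ∃ x : X, ∀ f : A, φ f = (f : C(X, ℂ)) x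

variable [MeasurableSpace X]

/-- A Jensen measure for `x` with respect to `A`: a regular Borel probability measure
`μ` on `X` with `f(x) = ∫ f dμ` for all `f ∈ A`, satisfying the Jensen inequality
`log|f(x)| ≤ ∫ log|f| dμ` (with `log 0 = -∞`).  When `f(x) = 0` the inequality is
vacuous; when `f(x) ≠ 0` the extended-real inequality is encoded by the equivalent
family of truncated inequalities with integrands `max (log|f|) c`, `c ∈ ℝ`. -/
def JensenMeasureA (A : Subalgebra ℂ C(X, ℂ)) (x : X) (μ : Measure X) : Prop :=
  IsProbabilityMeasure μ ∧ μ.Regular ∧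
    (∀ f ∈ A, f x = ∫ z, f z ∂μ) ∧
    ∀ f ∈ A, f x ≠ 0 →
      ∀ c : ℝ, Real.log (‖f x‖) ≤ ∫ z, max (Real.log (‖f z‖)) c ∂μ

/-- The closed support of a measure: the set of points all of whose open neighbourhoods
have nonzero measure. -/
def measSupport (μ : Measure X) : Set X :=
  {y | ∀ U : Set X, IsOpen U → y ∈ U → μ U ≠ 0}

/-- Lemma 2.1 (paper, Lemma `Jensen_measures`): if `x` has a non-trivial Jensen measure
`μ` with closed support `F`, then `J_y ⊆ M_x` for all `y ∈ F \ {x}`; hence `x` is not a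
point of continuity and no point of `F \ {x}` is an R-point. -/
theorem jensen_measure_support (X : Type*) [TopologicalSpace X] [CompactSpace X]
    [T2Space X] [MeasurableSpace X] [BorelSpace X]
    (A : Subalgebra ℂ C(X, ℂ)) (hA : IsNaturalUniformAlgebra A)
    (x : X) (μ : Measure X) (hμ : JensenMeasureA A x μ) (hnt : μ ≠ Measure.dirac x) :
    (∀ y ∈ measSupport μ, y ≠ x → JsetA A y ⊆ MsetA A x) ∧
      ¬ PoCA A x ∧
      (∀ y ∈ measSupport μ, y ≠ x → ¬ RPtA A y) := by
  obtain ⟨hprob, hreg, hrep, hjen⟩ := hμ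
  haveI := hprob
  -- Key analytic step: a function of `A` vanishing on an open set of positive measure
  -- must vanish at `x`.
  have key : ∀ f : C(X, ℂ), f ∈ A → ∀ U : Set X, IsOpen U → μ U ≠ 0 →
      (∀ z ∈ U, f z = 0) → f x = 0 := by
    intro f hfA U hUopen hUμ hfU
    by_contra hfx
    set L := Real.log (‖f x‖) with hLdef
    set M := max (Real.log ‖f‖) 0 with hMdef
    have hM0 : (0 : ℝ) ≤ M := le_max_right _ _
    have hUm : MeasurableSet U := hUopen.measurableSet
    set a := (μ Uᶜ).toReal with hadef
    set b := (μ U).toReal with hbdef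
    have hb0 : 0 < b := ENNReal.toReal_pos hUμ (measure_ne_top μ U)
    have ha0 : 0 ≤ a := ENNReal.toReal_nonneg
    have hab : b + a = 1 := by
      have hsum : μ U + μ Uᶜ = 1 := by
        rw [measure_add_measure_compl hUm, measure_univ]
      have := congrArg ENNReal.toReal hsum
      rwa [ENNReal.toReal_add (measure_ne_top μ U) (measure_ne_top μ Uᶜ),
        ENNReal.toReal_one] at this
    -- choose a large exponent `n`
    set n := max (max 1 (-M)) ((a * M - L) / b + 1) with hndef
    have hn1 : (1 : ℝ) ≤ n := le_trans (le_max_left _ _) (le_max_left _ _)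
    have hnM : -M ≤ n := le_trans (le_max_right _ _) (le_max_left _ _)
    have hnb : (a * M - L) / b + 1 ≤ n := le_max_right _ _
    set t := Real.exp n with htdef
    have ht0 : (0 : ℝ) < t := Real.exp_pos n
    set g : C(X, ℂ) := (t : ℂ) • f with hgdef
    have hgA : g ∈ A := A.smul_mem hfA _
    have hgval : ∀ z, ‖g z‖ = t * ‖f z‖ := by
      intro z
      simp [hgdef, norm_smul, abs_of_pos ht0]
    have hgx : g x ≠ 0 := by
      simp only [hgdef, ContinuousMap.smul_apply, smul_eq_mul, mul_ne_zero_iff]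
      exact ⟨by exact_mod_cast ne_of_gt ht0, hfx⟩
    have hJ := hjen g hgA hgx 0
    -- left-hand side
    have hLHS : Real.log (‖g x‖) = n + L := by
      rw [hgval x, Real.log_mul (ne_of_gt ht0) (by
        simpa using (norm_ne_zero_iff.mpr hfx)), htdef, Real.log_exp]
    -- pointwise bound on the integrand
    have hbound : ∀ z, max (Real.log (‖g z‖)) 0 ≤
        Uᶜ.indicator (fun _ => n + M) z := by
      intro z
      by_cases hz : z ∈ U
      · have : g z = 0 := by simp [hgdef, hfU z hz]
        simp [this, indicator_of_notMem (by simpa using hz : z ∉ Uᶜ)]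
      · rw [indicator_of_mem (by simpa using hz) (fun _ => n + M)]
        have hnM' : 0 ≤ n + M := by linarith
        refine max_le ?_ hnM'
        rw [hgval z]
        by_cases hfz : f z = 0
        · simp [hfz, hnM']
        · have habs : (0 : ℝ) < ‖f z‖ := norm_pos_iff.mpr hfz
          rw [Real.log_mul (ne_of_gt ht0) (ne_of_gt habs), htdef, Real.log_exp]
          have h1 : Real.log (‖f z‖) ≤ Real.log ‖f‖ := by
            apply Real.log_le_log habs
            exact f.norm_coe_le_norm z
          have h2 : Real.log ‖f‖ ≤ M := le_max_left _ _
          linarith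
    -- integrability
    have hmeas : AEStronglyMeasurable (fun z => max (Real.log (‖g z‖)) 0) μ := by
      refine Measurable.aestronglyMeasurable ?_
      exact (Real.measurable_log.comp
        g.continuous.norm.measurable).max measurable_const
    have hint1 : Integrable (fun z => max (Real.log (‖g z‖)) 0) μ := by
      refine ⟨hmeas, MeasureTheory.HasFiniteIntegral.of_bounded (C := n + M) ?_⟩
      refine ae_of_all μ fun z => ?_
      have h1 := hbound z
      have h2 : (0 : ℝ) ≤ max (Real.log (‖g z‖)) 0 := le_max_right _ _
      have h3 : Uᶜ.indicator (fun _ => n + M) z ≤ n + M := by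
        by_cases hz : z ∈ Uᶜ <;> simp [hz] <;> linarith
      rw [Real.norm_eq_abs, abs_of_nonneg h2]
      linarith
    have hint2 : Integrable (Uᶜ.indicator (fun _ => n + M)) μ :=
      (integrable_const (n + M)).indicator hUm.compl
    have hind : ∫ z, Uᶜ.indicator (fun _ => n + M) z ∂μ = a * (n + M) := by
      rw [integral_indicator_const _ hUm.compl]
      simp [hadef, smul_eq_mul, Measure.real]
    have hchain : n + L ≤ a * (n + M) := by
      calc n + L = Real.log (‖g x‖) := hLHS.symm
        _ ≤ ∫ z, max (Real.log (‖g z‖)) 0 ∂μ := hJ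
        _ ≤ ∫ z, Uᶜ.indicator (fun _ => n + M) z ∂μ :=
            integral_mono hint1 hint2 hbound
        _ = a * (n + M) := hind
    -- derive the contradiction
    have hb' : a * M - L ≤ (n - 1) * b :=
      (div_le_iff₀ hb0).mp (by linarith : (a * M - L) / b ≤ n - 1)
    nlinarith [hchain, hb', hb0, hab]
  -- the support contains a point other than `x`
  have hy : ∃ y ∈ measSupport μ, y ≠ x := by
    by_contra h
    push_neg at h
    apply hnt
    have hcompl : μ ({x}ᶜ) = 0 := by
      by_contra h0
      obtain ⟨K, hKsub, hKc, hKpos⟩ := hreg.innerRegular isOpen_compl_singleton 0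
        (pos_iff_ne_zero.mpr h0)
      have hzK : ∀ z : K, ∃ V : Set X, IsOpen V ∧ (z : X) ∈ V ∧ μ V = 0 := by
        rintro ⟨z, hz⟩
        have hzx : z ≠ x := by simpa using hKsub hz
        by_contra hc
        push_neg at hc
        exact hzx (h z (fun V hVo hzV => hc V hVo hzV))
      choose V hVo hVm hV0 using hzK
      obtain ⟨s, hs⟩ := hKc.elim_finite_subcover V hVo
        (fun z hz => mem_iUnion.2 ⟨⟨z, hz⟩, hVm _⟩)
      have : μ K ≤ ∑ i ∈ s, μ (V i) :=
        le_trans (measure_mono hs) (measure_biUnion_finset_le s V)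
      simp only [hV0, Finset.sum_const_zero] at this
      exact absurd (le_antisymm this zero_le) (pos_iff_ne_zero.mp hKpos)
    refine Measure.ext fun s hs => ?_
    by_cases hxs : x ∈ s
    · have hsc : μ sᶜ = 0 :=
        by
        refine measure_mono_null ?_ hcompl
        intro z hz hzx
        rw [mem_singleton_iff] at hzx
        exact hz (by rw [hzx]; exact hxs)
      have h1 : μ s + μ sᶜ = μ univ := measure_add_measure_compl (μ := μ) hs
      rw [hsc, add_zero, measure_univ] at h1
      rw [h1, Measure.dirac_apply' x hs, indicator_of_mem hxs]
      rfl
    · have : μ s = 0 :=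
        by
        refine measure_mono_null ?_ hcompl
        intro z hz hzx
        rw [mem_singleton_iff] at hzx
        exact hxs (by rw [← hzx]; exact hz)
      rw [this, Measure.dirac_apply' x hs, indicator_of_notMem hxs]
  -- assemble the conclusions
  have main : ∀ y ∈ measSupport μ, y ≠ x → JsetA A y ⊆ MsetA A x := by
    rintro y hys hyx f ⟨hfA, U, hUo, hyU, hfU⟩
    exact ⟨hfA, key f hfA U hUo (hys U hUo hyU) hfU⟩
  refine ⟨main, ?_, ?_⟩
  · intro hpoc
    obtain ⟨y, hys, hyx⟩ := hy
    exact hpoc y hyx (main y hys hyx)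
  · intro y hys hyx hrpt
    exact hrpt x (Ne.symm hyx) (main y hys hyx)

end
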